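/- arXiv:2010.01894 — 6 statements merged into one kernel-verified Lean document; each statement's English description precedes it below -/
import Mathlib

section
/- Let h, u be quaternions satisfying h*u - u*h = u^2 + 1. Then u is purely imaginary (Re u = 0), u has unit norm (|u|^2 = 1, equivalently u^2 = -1), and u commutes with h (h*u = u*h). -/
open scoped Quaternion

/-- If `h*u - u*h = u^2 + 1`, then `u` is purely imaginary, `u^2 = -1`, and
`u` commutes with `h`. -/
theorem versor_of_commutator_eq_sq_add_one (h u : ℍ[ℝ])
    (hyp : h * u - u * h = u ^ 2 + 1) :
    u.re = 0 ∧ u ^ 2 = -1 ∧ h * u = u * h := by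
  have e0 := congrArg QuaternionAlgebra.re hyp
  have e1 := congrArg QuaternionAlgebra.imI hyp
  have e2 := congrArg QuaternionAlgebra.imJ hyp
  have e3 := congrArg QuaternionAlgebra.imK hyp
  simp only [pow_two, Quaternion.re_sub, Quaternion.re_mul, Quaternion.re_add,
    Quaternion.re_one, Quaternion.imI_sub, Quaternion.imI_mul, Quaternion.imI_add,
    Quaternion.imI_one, Quaternion.imJ_sub, Quaternion.imJ_mul, Quaternion.imJ_add,
    Quaternion.imJ_one, Quaternion.imK_sub, Quaternion.imK_mul, Quaternion.imK_add,
    Quaternion.imK_one] at e0 e1 e2 e3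
  have key : u.re * (u.re * u.re + 1) = 0 := by
    linear_combination (-u.imI / 2) * e1 + (-u.imJ / 2) * e2 + (-u.imK / 2) * e3 - u.re * e0
  have hx : u.re = 0 := by
    rcases mul_eq_zero.mp key with h' | h'
    · exact h'
    · nlinarith [sq_nonneg u.re]
  have hn : u.imI * u.imI + u.imJ * u.imJ + u.imK * u.imK = 1 := by nlinarith
  have hsq : u ^ 2 = -1 := by
    ext <;> simp [pow_two, Quaternion.re_mul, Quaternion.imI_mul, Quaternion.imJ_mul,
      Quaternion.imK_mul, hx] <;> ring_nf <;> nlinarith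
  refine ⟨hx, hsq, ?_⟩
  have h0 : h * u - u * h = 0 := by rw [hyp, hsq]; exact neg_add_cancel 1
  exact sub_eq_zero.mp h0
end

section
/- Let N be a 2×2 matrix over the quaternions. If θ * N * θ† = 0 for every row vector θ ∈ ℍ², then N = 0. -/
open scoped Quaternion

/-- If `θ * N * θ† = 0` for every row vector `θ ∈ ℍ²`, then `N = 0`. -/
theorem eq_zero_of_quadratic_form_zero (N : Matrix (Fin 2) (Fin 2) ℍ[ℝ])
    (hyp : ∀ θ : Fin 2 → ℍ[ℝ],
      ∑ i, ∑ j, θ i * N i j * star (θ j) = 0) : N = 0 := by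
  have h := fun a b : ℍ[ℝ] => hyp ![a, b]
  simp only [Fin.sum_univ_two, Matrix.cons_val_zero, Matrix.cons_val_one, Matrix.head_cons] at h
  have h00 := h 1 0
  have h11 := h 0 1
  simp at h00 h11
  have h1 := h 1 1
  obtain ⟨qi, qi1, qi2, qi3, qi4⟩ : ∃ q : ℍ[ℝ], q.re = 0 ∧ q.imI = 1 ∧ q.imJ = 0 ∧ q.imK = 0 :=
    ⟨⟨0,1,0,0⟩, rfl, rfl, rfl, rfl⟩
  have hi := h 1 qi
  obtain ⟨qj, qj1, qj2, qj3, qj4⟩ : ∃ q : ℍ[ℝ], q.re = 0 ∧ q.imI = 0 ∧ q.imJ = 1 ∧ q.imK = 0 :=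
    ⟨⟨0,0,1,0⟩, rfl, rfl, rfl, rfl⟩
  have hj := h 1 qj
  obtain ⟨qk, qk1, qk2, qk3, qk4⟩ : ∃ q : ℍ[ℝ], q.re = 0 ∧ q.imI = 0 ∧ q.imJ = 0 ∧ q.imK = 1 :=
    ⟨⟨0,0,0,1⟩, rfl, rfl, rfl, rfl⟩
  have hk := h 1 qk
  simp [h00, h11] at h1 hi hj hk
  have h10 : N 1 0 = -N 0 1 := eq_neg_of_add_eq_zero_right h1
  rw [h10] at hi hj hk
  simp only [Quaternion.ext_iff, Quaternion.re_mul, Quaternion.imI_mul, Quaternion.imJ_mul,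
    Quaternion.imK_mul, Quaternion.re_star, Quaternion.imI_star, Quaternion.imJ_star,
    Quaternion.imK_star, Quaternion.re_add, Quaternion.imI_add, Quaternion.imJ_add,
    Quaternion.imK_add, Quaternion.re_neg, Quaternion.imI_neg, Quaternion.imJ_neg,
    Quaternion.imK_neg, Quaternion.re_zero, Quaternion.imI_zero, Quaternion.imJ_zero,
    Quaternion.imK_zero, qi1, qi2, qi3, qi4, qj1, qj2, qj3, qj4, qk1, qk2, qk3, qk4] at hi hj hk
  have h01 : N 0 1 = 0 := by
    ext <;> simp <;> obtain ⟨hi1,hi2,hi3,hi4⟩ := hi <;> obtain ⟨hj1,hj2,hj3,hj4⟩ := hj <;>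
      obtain ⟨hk1,hk2,hk3,hk4⟩ := hk <;> linarith
  apply Matrix.ext; intro i j
  fin_cases i <;> fin_cases j <;> simp [h00, h11, h01, h10]
end

section
/- Let b, q, u, r be quaternions with b ≠ 0 and q ≠ 0. If b*q is real, b*u*q is real, and b*r is real, then b*u*r is also real. -/
open scoped Quaternion

/-- If `b*q`, `b*u*q`, and `b*r` are all real (with `b ≠ 0`, `q ≠ 0`), then
`b*u*r` is real. -/
theorem real_of_three_real (b q u r : ℍ[ℝ]) (hb : b ≠ 0) (hq : q ≠ 0)
    (h1 : ∃ t : ℝ, b * q = (t : ℍ[ℝ]))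
    (h2 : ∃ t : ℝ, b * u * q = (t : ℍ[ℝ]))
    (h3 : ∃ t : ℝ, b * r = (t : ℍ[ℝ])) :
    ∃ t : ℝ, b * u * r = (t : ℍ[ℝ]) := by
  obtain ⟨t1, h1⟩ := h1
  obtain ⟨t2, h2⟩ := h2
  obtain ⟨t3, h3⟩ := h3
  have ht1 : ((t1 : ℝ) : ℍ[ℝ]) ≠ 0 := by
    intro h
    rw [h, mul_eq_zero] at h1
    rcases h1 with h' | h' <;> [exact hb h'; exact hq h']
  have hqv : q = b⁻¹ * (t1 : ℍ[ℝ]) := by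
    rw [← h1, ← mul_assoc, inv_mul_cancel₀ hb, one_mul]
  have hu : u = ((t2 / t1 : ℝ) : ℍ[ℝ]) := by
    have key : b * u * b⁻¹ * (t1 : ℍ[ℝ]) = (t2 : ℍ[ℝ]) := by
      rw [mul_assoc (b * u), ← hqv]; exact h2
    have hc : b * u * b⁻¹ = ((t2 / t1 : ℝ) : ℍ[ℝ]) := by
      rw [Quaternion.coe_div, div_eq_mul_inv, eq_mul_inv_iff_mul_eq₀ ht1]
      exact key
    have h4 := congrArg (fun x => b⁻¹ * x * b) hc
    rw [show b⁻¹ * (b * u * b⁻¹) * b = u by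
      rw [mul_assoc, mul_assoc, inv_mul_cancel₀ hb, mul_one,
        ← mul_assoc, inv_mul_cancel₀ hb, one_mul]] at h4
    rw [h4, ← Quaternion.coe_commutes, mul_assoc, inv_mul_cancel₀ hb, mul_one]
  refine ⟨t2 / t1 * t3, ?_⟩
  rw [hu, ← Quaternion.coe_commutes, mul_assoc, h3, Quaternion.coe_mul]
end

section
/- Let p, r be nonzero quaternions and h a quaternion satisfying h*r + r*conj(p*h*p⁻¹) = 0. Then Re(h) = 0 and h commutes with r*p, i.e. h*(r*p) = (r*p)*h. -/
open scoped Quaternion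

lemma star_conj_mul (p h : ℍ[ℝ]) (hp : p ≠ 0) :
    star (p * h * p⁻¹) * p = p * star h := by
  have hsp : (star p : ℍ[ℝ]) ≠ 0 := star_ne_zero.mpr hp
  apply mul_left_cancel₀ hsp
  have h1 : star p * star (p * h * p⁻¹) = star (p * h * p⁻¹ * p) := (star_mul _ _).symm
  have h2 : p * h * p⁻¹ * p = p * h := by
    rw [mul_assoc, inv_mul_cancel₀ hp, mul_one]
  rw [← mul_assoc, h1, h2, star_mul, mul_assoc]
  have h3 : (star p : ℍ[ℝ]) * p = ((Quaternion.normSq p : ℝ) : ℍ[ℝ]) := by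
    simpa using Quaternion.star_mul_self p
  rw [h3, ← mul_assoc, h3]
  exact ((Quaternion.coe_commute _ (star h)).eq).symm

/-- If `h*r + r * conj (p*h*p⁻¹) = 0` with `p, r ≠ 0`, then `Re h = 0` and
`h` commutes with `r*p`. -/
theorem re_zero_and_commutes (p r h : ℍ[ℝ]) (hp : p ≠ 0) (hr : r ≠ 0)
    (hyp : h * r + r * star (p * h * p⁻¹) = 0) :
    h.re = 0 ∧ h * (r * p) = (r * p) * h := by
  set s : ℍ[ℝ] := r * p with hs
  have key : h * s + s * star h = 0 := by
    have := congrArg (· * p) hyp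
    simp only [add_mul, zero_mul, mul_assoc] at this
    simp only [← mul_assoc] at this
    rw [mul_assoc r _ p, star_conj_mul p h hp] at this
    simpa [hs, mul_assoc] using this
  have hs0 : s ≠ 0 := mul_ne_zero hr hp
  have e0 := congrArg QuaternionAlgebra.re key
  have e1 := congrArg QuaternionAlgebra.imI key
  have e2 := congrArg QuaternionAlgebra.imJ key
  have e3 := congrArg QuaternionAlgebra.imK key
  simp only [Quaternion.re_add, Quaternion.imI_add, Quaternion.imJ_add, Quaternion.imK_add,
    Quaternion.re_mul, Quaternion.imI_mul, Quaternion.imJ_mul, Quaternion.imK_mul,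
    Quaternion.re_star, Quaternion.imI_star, Quaternion.imJ_star, Quaternion.imK_star,
    Quaternion.re_zero, Quaternion.imI_zero, Quaternion.imJ_zero, Quaternion.imK_zero] at e0 e1 e2 e3
  have hpos : 0 < s.re ^ 2 + s.imI ^ 2 + s.imJ ^ 2 + s.imK ^ 2 := by
    have h1 : Quaternion.normSq s ≠ 0 := Quaternion.normSq_ne_zero.mpr hs0
    have h2 : 0 ≤ Quaternion.normSq s := Quaternion.normSq_nonneg
    rw [Quaternion.normSq_def'] at h1 h2
    exact lt_of_le_of_ne h2 (Ne.symm h1)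
  have hz : h.re ^ 2 * (s.re ^ 2 + s.imI ^ 2 + s.imJ ^ 2 + s.imK ^ 2) = 0 := by
    linear_combination (h.re * s.re / 2) * e0 + (h.re * s.imI / 2) * e1 +
      (h.re * s.imJ / 2) * e2 + (h.re * s.imK / 2) * e3
  have ha : h.re = 0 := by
    have := (mul_eq_zero.mp hz).resolve_right (ne_of_gt hpos)
    exact (pow_eq_zero_iff two_ne_zero).mp this
  refine ⟨ha, ?_⟩
  ext
  · simp only [Quaternion.re_mul]; ring
  · simp only [Quaternion.imI_mul]; linear_combination e1 - 2 * s.imI * ha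
  · simp only [Quaternion.imJ_mul]; linear_combination e2 - 2 * s.imJ * ha
  · simp only [Quaternion.imK_mul]; linear_combination e3 - 2 * s.imK * ha
end

section
/- Let h and l be purely imaginary quaternions with l ≠ 0, and suppose l = -(h*(h*l - l*h) - (h*l - l*h)*h), i.e. l = -[h,[h,l]]. Then h*l + l*h = 0 (h and l are orthogonal) and |h|² = 1/4. -/
open scoped Quaternion

/-- A quaternion given by its four components, typed as `ℍ[ℝ]`. -/
def qmk (r i j k : ℝ) : ℍ[ℝ] := ⟨r, i, j, k⟩

@[simp] theorem qmk_re (r i j k : ℝ) : (qmk r i j k).re = r := rfl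
@[simp] theorem qmk_imI (r i j k : ℝ) : (qmk r i j k).imI = i := rfl
@[simp] theorem qmk_imJ (r i j k : ℝ) : (qmk r i j k).imJ = j := rfl
@[simp] theorem qmk_imK (r i j k : ℝ) : (qmk r i j k).imK = k := rfl

/-- If `h`, `l` are purely imaginary, `l ≠ 0`, and `l = -[h,[h,l]]`, then
`h` and `l` are orthogonal (`h*l + l*h = 0`) and `|h|² = 1/4`. -/
theorem orthogonal_and_norm_quarter (h l : ℍ[ℝ])
    (hh : h.re = 0) (hl : l.re = 0) (hl0 : l ≠ 0)
    (hyp : l = -(h * (h * l - l * h) - (h * l - l * h) * h)) :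
    h * l + l * h = 0 ∧ Quaternion.normSq h = 1 / 4 := by
  obtain ⟨a, b, c, rfl⟩ : ∃ a b c, h = qmk 0 a b c :=
    ⟨h.imI, h.imJ, h.imK, by ext <;> simp [hh]⟩
  obtain ⟨x, y, z, rfl⟩ : ∃ x y z, l = qmk 0 x y z :=
    ⟨l.imI, l.imJ, l.imK, by ext <;> simp [hl]⟩
  rw [Quaternion.ext_iff] at hyp
  simp only [Quaternion.re_neg, Quaternion.imI_neg, Quaternion.imJ_neg, Quaternion.imK_neg,
    Quaternion.re_sub, Quaternion.imI_sub, Quaternion.imJ_sub, Quaternion.imK_sub,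
    Quaternion.re_mul, Quaternion.imI_mul, Quaternion.imJ_mul, Quaternion.imK_mul,
    qmk_re, qmk_imI, qmk_imJ, qmk_imK] at hyp
  obtain ⟨-, ex, ey, ez⟩ := hyp
  have hlne : x ≠ 0 ∨ y ≠ 0 ∨ z ≠ 0 := by
    by_contra hc
    push_neg at hc
    exact hl0 (by rw [hc.1, hc.2.1, hc.2.2]; ext <;> simp)
  ring_nf at ex ey ez
  have hs : a * x + b * y + c * z = 0 := by linear_combination a*ex + b*ey + c*ez
  have hx : (1 - 4 * (a^2 + b^2 + c^2)) * x = 0 := by linear_combination ex - 4*a*hs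
  have hy : (1 - 4 * (a^2 + b^2 + c^2)) * y = 0 := by linear_combination ey - 4*b*hs
  have hz : (1 - 4 * (a^2 + b^2 + c^2)) * z = 0 := by linear_combination ez - 4*c*hs
  have hn : a^2 + b^2 + c^2 = 1/4 := by
    rcases hlne with h0 | h0 | h0
    · rcases mul_eq_zero.mp hx with h1 | h1
      · linarith
      · exact absurd h1 h0
    · rcases mul_eq_zero.mp hy with h1 | h1
      · linarith
      · exact absurd h1 h0
    · rcases mul_eq_zero.mp hz with h1 | h1
      · linarith
      · exact absurd h1 h0
  constructor
  · ext <;> simp [Quaternion.re_mul, Quaternion.imI_mul, Quaternion.imJ_mul, Quaternion.imK_mul]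
      <;> linarith [hs]
  · simp only [Quaternion.normSq_def', Quaternion.re_add]
    simp
    nlinarith [hn]
end

section
/- Let q be a nonzero purely imaginary quaternion and M a 2×2 matrix over the quaternions. Define μ(θ) = q • (θ * M) for row vectors θ ∈ ℍ² (left scalar multiplication by q and right multiplication by M), and the pairing ⟨θ, θ'⟩ = Re(θ * θ'†). Then ⟨μ(θ), θ'⟩ = ⟨θ, μ(θ')⟩ for all θ, θ' if and only if M is quaternion skew-Hermitian, i.e. M† = -M. -/
open scoped Quaternion Matrix

private lemma re_comm (a b : ℍ[ℝ]) : (a * b).re = (b * a).re := by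
  simp only [Quaternion.re_mul]; ring

private lemma eq_zero_of_re_mul (x : ℍ[ℝ]) (h : ∀ a : ℍ[ℝ], (a * x).re = 0) : x = 0 := by
  have := h (star x)
  rw [Quaternion.star_mul_self, Quaternion.re_coe] at this
  exact Quaternion.normSq_eq_zero.mp this

private lemma term_lemma (q θ θ' m : ℍ[ℝ]) (hq : star q = -q) :
    (θ * star (q * (θ' * m))).re = (q * (θ * (-star m)) * star θ').re := by
  rw [star_mul, star_mul, hq]
  simp only [Quaternion.re_mul, Quaternion.imI_mul, Quaternion.imJ_mul, Quaternion.imK_mul,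
    Quaternion.re_star, Quaternion.imI_star, Quaternion.imJ_star, Quaternion.imK_star,
    Quaternion.re_neg, Quaternion.imI_neg, Quaternion.imJ_neg, Quaternion.imK_neg]
  ring

/-- For `q` nonzero purely imaginary, `θ ↦ q • (θ * M)` is symmetric for the
pairing `⟨θ, θ'⟩ = Re (θ * θ'†)` iff `M` is quaternion skew-Hermitian. -/
theorem symmetric_iff_skewHermitian (q : ℍ[ℝ]) (hq_im : q.re = 0) (hq : q ≠ 0)
    (M : Matrix (Fin 2) (Fin 2) ℍ[ℝ]) :
    (∀ θ θ' : Fin 2 → ℍ[ℝ],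
      (∑ j, (q * ∑ i, θ i * M i j) * star (θ' j)).re =
      (∑ j, θ j * star (q * ∑ i, θ' i * M i j)).re) ↔ Mᴴ = -M := by
  have hsq : star q = -q := Quaternion.star_eq_neg.mpr hq_im
  constructor
  · intro h
    refine Matrix.ext fun i j => ?_
    have key : ∀ a : ℍ[ℝ],
        (q * (a * M i j)).re = (a * star (q * M j i)).re := by
      intro a
      fin_cases i <;> fin_cases j
      · have := h ![a, 0] ![1, 0]
        simpa [Fin.sum_univ_two] using this
      · have := h ![a, 0] ![0, 1]
        simpa [Fin.sum_univ_two] using this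
      · have := h ![0, a] ![1, 0]
        simpa [Fin.sum_univ_two] using this
      · have := h ![0, a] ![0, 1]
        simpa [Fin.sum_univ_two] using this
    have key2 : ∀ a : ℍ[ℝ], (a * ((M i j + star (M j i)) * q)).re = 0 := by
      intro a
      have h1 := key a
      have h2 : (q * (a * M i j)).re = (a * (M i j * q)).re := by
        rw [re_comm q (a * M i j), mul_assoc]
      have h3 : (a * star (q * M j i)).re = -(a * (star (M j i) * q)).re := by
        rw [star_mul, hsq]
        simp only [mul_neg, Quaternion.re_neg, mul_assoc]
      rw [h2, h3] at h1
      have : (a * (M i j * q)).re + (a * (star (M j i) * q)).re = 0 := by linarith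
      calc (a * ((M i j + star (M j i)) * q)).re
          = (a * (M i j * q) + a * (star (M j i) * q)).re := by rw [add_mul, mul_add]
        _ = (a * (M i j * q)).re + (a * (star (M j i) * q)).re := Quaternion.re_add _ _
        _ = 0 := this
    have hzero : (M i j + star (M j i)) * q = 0 := eq_zero_of_re_mul _ key2
    have hn : M i j + star (M j i) = 0 := by
      rcases mul_eq_zero.mp hzero with h' | h'
      · exact h'
      · exact absurd h' hq
    have : star (M j i) = -(M i j) := eq_neg_of_add_eq_zero_right hn
    simp [Matrix.conjTranspose_apply, Matrix.neg_apply, this]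
  · intro hM θ θ'
    have e : ∀ a b : Fin 2, star (M a b) = -(M b a) := by
      intro a b
      have := congrFun (congrFun hM b) a
      simpa [Matrix.conjTranspose_apply] using this
    have tl : ∀ θ θ' m : ℍ[ℝ],
        (θ * star (q * (θ' * m))).re = (q * (θ * (-star m)) * star θ').re :=
      fun θ θ' m => term_lemma q θ θ' m hsq
    simp only [Fin.sum_univ_two, mul_add, star_add, add_mul, Quaternion.re_add, tl, e, neg_neg]
    ring
end
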